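/- Let \tilde{A} be a real symmetric n\times n matrix with spectrum in [-1,1], \beta \in [0,1), L \ge 0, and P = (1-\beta)\sum_{l=0}^{L}\beta^l \tilde{A}^l. Then P is positive definite, i.e., x^T P x > 0 for every nonzero x \in \mathbb{R}^n. -/

import Mathlib

open Matrix

lemma aux_quad_lb {n : ℕ} {A : Matrix (Fin n) (Fin n) ℝ} (hA : A.IsHermitian)
    (hspec : spectrum ℝ A ⊆ Set.Icc (-1 : ℝ) 1) (y : Fin n → ℝ) :
    -(y ⬝ᵥ y) ≤ y ⬝ᵥ A.mulVec y := by
  have h1 : (1 + A).IsHermitian := Matrix.isHermitian_one.add hA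
  have hpsd : (1 + A).PosSemidef := by
    refine h1.posSemidef_iff_eigenvalues_nonneg.mpr fun i => ?_
    have hmem := h1.eigenvalues_mem_spectrum_real i
    set μ := h1.eigenvalues i with hμ
    have : μ - 1 ∈ spectrum ℝ A := by
      have := (spectrum.add_mem_add_iff (a := A) (r := μ - 1) (s := (1:ℝ))).mp
      simp only [_root_.map_one, sub_add_cancel] at this
      exact this hmem
    have h2 := hspec this
    rw [Pi.zero_apply]
    linarith [h2.1]
  have := hpsd.dotProduct_mulVec_nonneg y
  simp only [RCLike.re_to_real, star_trivial, Matrix.add_mulVec, Matrix.one_mulVec,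
    dotProduct_add] at this
  linarith

lemma aux_sum_lb {n : ℕ} {A : Matrix (Fin n) (Fin n) ℝ} (hA : A.IsHermitian)
    (hspec : spectrum ℝ A ⊆ Set.Icc (-1 : ℝ) 1)
    {β : ℝ} (hβ0 : 0 ≤ β) (hβ1 : β < 1) :
    ∀ L : ℕ, ∀ x : Fin n → ℝ,
      (1 - β) * (x ⬝ᵥ x) ≤ ∑ l ∈ Finset.range (L + 1), β ^ l * (x ⬝ᵥ (A ^ l).mulVec x) := by
  have hsymm : ∀ (x y : Fin n → ℝ), x ⬝ᵥ A.mulVec y = (A.mulVec x) ⬝ᵥ y := by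
    intro x y
    have hAT : Aᵀ = A := by
      rw [← Matrix.conjTranspose_eq_transpose_of_trivial]; exact hA.eq
    rw [dotProduct_mulVec, ← hAT, Matrix.vecMul_transpose, hAT]
  have hshift : ∀ (l : ℕ) (x : Fin n → ℝ),
      x ⬝ᵥ (A ^ (l + 1 + 1)).mulVec x = (A.mulVec x) ⬝ᵥ (A ^ l).mulVec (A.mulVec x) := by
    intro l x
    have : A ^ (l + 1 + 1) = A * (A ^ l * A) := by
      rw [pow_succ, pow_succ', mul_assoc]
    rw [this, ← Matrix.mulVec_mulVec, hsymm, ← Matrix.mulVec_mulVec]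
  intro L
  induction L using Nat.twoStepInduction with
  | zero =>
    intro x
    have h0 : 0 ≤ x ⬝ᵥ x := Finset.sum_nonneg fun i _ => mul_self_nonneg _
    simp only [zero_add, Finset.sum_range_one, pow_zero, one_mul, Matrix.one_mulVec]
    nlinarith
  | one =>
    intro x
    have h0 : 0 ≤ x ⬝ᵥ x := Finset.sum_nonneg fun i _ => mul_self_nonneg _
    have hq := aux_quad_lb hA hspec x
    simp only [Finset.sum_range_succ, Finset.sum_range_zero, Finset.sum_range_one, pow_zero,
      one_mul, pow_one, Matrix.one_mulVec, zero_add]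
    nlinarith [mul_le_mul_of_nonneg_left hq hβ0]
  | more L ih _ =>
    intro x
    have h0 : 0 ≤ x ⬝ᵥ x := Finset.sum_nonneg fun i _ => mul_self_nonneg _
    have hq := aux_quad_lb hA hspec x
    have hAx := ih (A.mulVec x)
    have hAx0 : 0 ≤ (A.mulVec x) ⬝ᵥ (A.mulVec x) :=
      Finset.sum_nonneg fun i _ => mul_self_nonneg _
    have hβ2 : (0:ℝ) ≤ β ^ 2 := sq_nonneg β
    have hterm : ∑ l ∈ Finset.range (L + 1), β ^ (l + 1 + 1) * (x ⬝ᵥ (A ^ (l + 1 + 1)).mulVec x)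
        = β ^ 2 * (∑ l ∈ Finset.range (L + 1),
            β ^ l * ((A.mulVec x) ⬝ᵥ (A ^ l).mulVec (A.mulVec x))) := by
      rw [Finset.mul_sum]
      refine Finset.sum_congr rfl fun l _ => ?_
      rw [hshift l x]
      ring
    have hrw : ∑ l ∈ Finset.range (L + 2 + 1), β ^ l * (x ⬝ᵥ (A ^ l).mulVec x)
        = β ^ 2 * (∑ l ∈ Finset.range (L + 1),
            β ^ l * ((A.mulVec x) ⬝ᵥ (A ^ l).mulVec (A.mulVec x)))
          + (β * (x ⬝ᵥ A.mulVec x) + x ⬝ᵥ x) := by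
      rw [Finset.sum_range_succ', Finset.sum_range_succ', hterm]
      simp only [pow_zero, pow_one, one_mul, Matrix.one_mulVec, zero_add]
      ring
    rw [hrw]
    have htail : β ^ 2 * ((1 - β) * ((A.mulVec x) ⬝ᵥ (A.mulVec x)))
        ≤ β ^ 2 * (∑ l ∈ Finset.range (L + 1),
            β ^ l * ((A.mulVec x) ⬝ᵥ (A ^ l).mulVec (A.mulVec x))) :=
      mul_le_mul_of_nonneg_left hAx hβ2
    have h1 : 0 ≤ β ^ 2 * ((1 - β) * ((A.mulVec x) ⬝ᵥ (A.mulVec x))) :=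
      mul_nonneg hβ2 (mul_nonneg (by linarith) hAx0)
    nlinarith [mul_le_mul_of_nonneg_left hq hβ0]

/-- The truncated Neumann series `P = (1-β) ∑_{l=0}^{L} β^l Ã^l` of a symmetric
matrix with spectrum in `[-1,1]` is positive definite: `xᵀ P x > 0` for `x ≠ 0`. -/
theorem stmt_6 {n : ℕ} (A : Matrix (Fin n) (Fin n) ℝ) (hA : A.IsHermitian)
    (hspec : spectrum ℝ A ⊆ Set.Icc (-1 : ℝ) 1)
    (β : ℝ) (hβ0 : 0 ≤ β) (hβ1 : β < 1) (L : ℕ)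
    (P : Matrix (Fin n) (Fin n) ℝ)
    (hP : P = (1 - β) • ∑ l ∈ Finset.range (L + 1), β ^ l • A ^ l) :
    ∀ x : Fin n → ℝ, x ≠ 0 → 0 < x ⬝ᵥ P.mulVec x := by
  intro x hx
  have hkey := aux_sum_lb hA hspec hβ0 hβ1 L x
  have hxx : 0 < x ⬝ᵥ x := by
    rcases lt_or_eq_of_le (Finset.sum_nonneg fun i _ => mul_self_nonneg (x i) :
      (0:ℝ) ≤ x ⬝ᵥ x) with h | h
    · exact h
    · exact absurd (dotProduct_self_eq_zero.mp h.symm) hx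
  have hform : x ⬝ᵥ P.mulVec x
      = (1 - β) * ∑ l ∈ Finset.range (L + 1), β ^ l * (x ⬝ᵥ (A ^ l).mulVec x) := by
    rw [hP, Matrix.smul_mulVec, dotProduct_smul, smul_eq_mul]
    congr 1
    have key : ∀ s : Finset ℕ,
        x ⬝ᵥ (∑ l ∈ s, β ^ l • A ^ l).mulVec x
          = ∑ l ∈ s, β ^ l * (x ⬝ᵥ (A ^ l).mulVec x) := by
      intro s
      induction s using Finset.induction_on with
      | empty => simp
      | insert _ _ hns ih =>
        rw [Finset.sum_insert hns, Finset.sum_insert hns, Matrix.add_mulVec, dotProduct_add, ih,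
          Matrix.smul_mulVec, dotProduct_smul, smul_eq_mul]
    exact key _
  rw [hform]
  have h1β : 0 < 1 - β := by linarith
  exact mul_pos h1β (lt_of_lt_of_le (mul_pos h1β hxx) hkey)
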